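/- There exist universal constants c, C > 0 such that the following holds. Let ε ∈ (0, 1), let G = (V, E) be a finite hypergraph on n ≥ 2 vertices, let β > 0, and fix an orientation of G (a head h(e) ∈ e for each edge e) that is (c·ε²/log n, β)-locally optimal, i.e., for every edge e and every endpoint u ∈ e, d⁻(h(e)) ≤ (1 + c·ε²/log n)·d⁻(u) + β. Then the maximum in-degree μ = max_{v ∈ V} d⁻(v) satisfies μ ≤ (1 + ε)·ρ(G) + C·β·(log n)/ε, where ρ(G) = max_{∅ ≠ S ⊆ V} |E(S)|/|S| is the maximum subhypergraph density. -/

import Mathlib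

open Finset

/-- In a finite hypergraph whose edges are indexed by `E`, with edge `e` having
(nonempty) endpoint set `ends e`, and with an orientation choosing a head
`h e ∈ ends e` for each edge: the in-degree of a vertex `v` is the number of
edges whose head is `v`. -/
noncomputable def hInDeg {V E : Type*} [Fintype E] [DecidableEq V]
    (h : E → V) (v : V) : ℝ :=
  ((univ.filter fun e => h e = v).card : ℝ)

/-- The density `|E(S)|/|S|` of a set `S` of vertices of a hypergraph: the
number of edges all of whose endpoints lie in `S` (with multiplicity), divided
by `|S|`. -/
noncomputable def hDensity {V E : Type*} [Fintype E] [DecidableEq V]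
    (ends : E → Finset V) (S : Finset V) : ℝ :=
  ((univ.filter fun e => ends e ⊆ S).card : ℝ) / S.card

/-- The maximum subhypergraph density `ρ(G) = max_{∅ ≠ S ⊆ V} |E(S)|/|S|`. -/
noncomputable def hMaxDensity {V E : Type*} [Fintype E] [DecidableEq V]
    (ends : E → Finset V) : ℝ :=
  sSup { d : ℝ | ∃ S : Finset V, S.Nonempty ∧ d = hDensity ends S }

set_option maxHeartbeats 1600000 in
/-- There exist universal constants `c, C > 0` such that for
every `ε ∈ (0,1)`, every finite hypergraph on `n ≥ 2` vertices, every `β > 0`,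
and every orientation that is `(c·ε²/log n, β)`-locally optimal (i.e.
`d⁻(h(e)) ≤ (1 + c·ε²/log n)·d⁻(u) + β` for every edge `e` and endpoint
`u ∈ e`), the maximum in-degree `μ = max_v d⁻(v)` satisfies
`μ ≤ (1+ε)·ρ(G) + C·β·(log n)/ε`. -/
theorem hypergraph_apxLocal_implies_eps_global : ∃ c C : ℝ, 0 < c ∧ 0 < C ∧
    ∀ (V E : Type) [Fintype V] [Fintype E] [DecidableEq V],
    ∀ ends : E → Finset V, (∀ e, (ends e).Nonempty) → 2 ≤ Fintype.card V →
    ∀ ε : ℝ, 0 < ε → ε < 1 →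
    ∀ β : ℝ, 0 < β →
    ∀ h : E → V, (∀ e, h e ∈ ends e) →
    (∀ e, ∀ u ∈ ends e,
      hInDeg h (h e) ≤
        (1 + c * ε ^ 2 / Real.log (Fintype.card V)) * hInDeg h u + β) →
    sSup (Set.range (hInDeg (E := E) h)) ≤
      (1 + ε) * hMaxDensity ends +
        C * β * Real.log (Fintype.card V) / ε := by
  classical
  refine ⟨1/100, 100, by norm_num, by norm_num, ?_⟩
  intro V E _ _ _ ends hends hcard ε hε0 hε1 β hβ h hmem hloc
  set n : ℕ := Fintype.card V with hn
  have hn2 : (2:ℝ) ≤ (n:ℝ) := by exact_mod_cast hcard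
  set L : ℝ := Real.log (n:ℝ) with hLdef
  have hL : (0.69:ℝ) ≤ L := by
    have h2 : (0.69:ℝ) ≤ Real.log 2 := by
      have := Real.log_two_gt_d9; linarith
    exact h2.trans (Real.log_le_log (by norm_num) hn2)
  have hLpos : (0:ℝ) < L := by linarith
  set α : ℝ := 1/100 * ε ^ 2 / L with hαdef
  have hα0 : (0:ℝ) ≤ α := by positivity
  have hα1 : α ≤ 1 := by
    rw [hαdef, div_le_one hLpos]; nlinarith
  have h1α : (0:ℝ) < 1 + α := by linarith
  set d : V → ℝ := hInDeg h with hddef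
  have hd0 : ∀ v, 0 ≤ d v := by
    intro v; rw [hddef]; unfold hInDeg; positivity
  have hdval : ∀ v, d v = ((univ.filter fun e => h e = v).card : ℝ) := by
    intro v; rw [hddef]; rfl
  have hVne : Nonempty V := by
    have : 0 < Fintype.card V := by omega
    exact Fintype.card_pos_iff.mp this
  obtain ⟨v₀, -, hv₀⟩ :=
    Finset.exists_max_image (univ : Finset V) d ⟨Classical.arbitrary V, mem_univ _⟩
  set μ : ℝ := d v₀ with hμdef
  have hμ0 : (0:ℝ) ≤ μ := hd0 v₀
  set ρ : ℝ := hMaxDensity ends with hρdef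
  -- local optimality in convenient form
  have hloc' : ∀ e, ∀ u ∈ ends e, d (h e) ≤ (1 + α) * d u + β := by
    intro e u hu; exact hloc e u hu
  -- ρ dominates every density
  have hbdd : BddAbove { x : ℝ | ∃ S : Finset V, S.Nonempty ∧ x = hDensity ends S } := by
    have hsub : { x : ℝ | ∃ S : Finset V, S.Nonempty ∧ x = hDensity ends S }
        ⊆ Set.range (hDensity ends) := by
      rintro x ⟨S, -, rfl⟩; exact ⟨S, rfl⟩
    exact (Set.finite_range (hDensity ends)).bddAbove.mono hsub
  have hρ_ge : ∀ S : Finset V, S.Nonempty → hDensity ends S ≤ ρ := by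
    intro S hS
    exact le_csSup hbdd ⟨S, hS, rfl⟩
  have hρ0 : (0:ℝ) ≤ ρ := by
    refine le_trans ?_ (hρ_ge univ univ_nonempty)
    unfold hDensity; positivity
  clear_value ρ d μ n L α
  -- thresholds
  set t : ℕ → ℝ := fun i => Nat.rec μ (fun _ ti => (ti - β) / (1 + α)) i with htdef
  have ht0 : t 0 = μ := rfl
  have htsucc : ∀ i, t (i+1) = (t i - β) / (1 + α) := fun i => rfl
  clear_value t
  have htμ : ∀ i, t i ≤ μ := by
    intro i
    induction i with
    | zero => exact le_of_eq ht0
    | succ i ih =>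
      rw [htsucc, div_le_iff₀ h1α]
      nlinarith
  have htlb : ∀ i : ℕ, μ / (1 + α) ^ i - β * i ≤ t i := by
    intro i
    induction i with
    | zero => simp [ht0]
    | succ i ih =>
      rw [htsucc]
      have hP : (0:ℝ) < (1 + α) ^ i := pow_pos h1α i
      have h1 : μ / (1 + α) ^ (i+1) = (μ / (1 + α) ^ i) / (1 + α) := by
        rw [pow_succ, div_div]
      have h2 : (μ / (1 + α) ^ i - β * i - β) / (1 + α) ≤ (t i - β) / (1 + α) := by
        apply div_le_div_of_nonneg_right ?_ h1α.le
        · linarith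
      have h4 : (μ / (1 + α) ^ i - β * i - β) / (1 + α)
          = (μ / (1 + α) ^ i) / (1 + α) - (β * i + β) / (1 + α) := by
        ring
      have h5 : (β * i + β) / (1 + α) ≤ β * i + β := by
        apply div_le_self (by positivity) (by linarith)
      rw [h1]
      push_cast
      linarith
  -- level sets
  set S : ℕ → Finset V := fun i => univ.filter (fun v => t i ≤ d v) with hSdef
  have hmemS : ∀ i v, v ∈ S i ↔ t i ≤ d v := by
    intro i v; rw [hSdef]; simp
  clear_value S
  have hv₀S : ∀ i, v₀ ∈ S i := by
    intro i; rw [hmemS]; exact hμdef ▸ htμ i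
  have hScard_pos : ∀ i, (0:ℝ) < ((S i).card : ℝ) := by
    intro i
    have : 0 < (S i).card := card_pos.mpr ⟨v₀, hv₀S i⟩
    exact_mod_cast this
  have hScard_le : ∀ i, ((S i).card : ℝ) ≤ (n:ℝ) := by
    intro i
    have : (S i).card ≤ Fintype.card V := card_le_univ _
    rw [← hn] at this
    exact_mod_cast this
  -- key inequality
  have key : ∀ i, t i * ((S i).card : ℝ) ≤ ρ * ((S (i+1)).card : ℝ) := by
    intro i
    have hsub : ∀ e, h e ∈ S i → ends e ⊆ S (i+1) := by
      intro e he u hu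
      rw [hmemS] at he ⊢
      have hl := hloc' e u hu
      rw [htsucc, div_le_iff₀ h1α]
      linarith
    have hc1 : (univ.filter fun e => h e ∈ S i).card
        ≤ (univ.filter fun e => ends e ⊆ S (i+1)).card := by
      apply card_le_card
      intro e he
      exact mem_filter.mpr ⟨mem_univ _, hsub e (mem_filter.mp he).2⟩
    have hc2 : ((univ.filter fun e => h e ∈ S i).card : ℝ) = ∑ v ∈ S i, d v := by
      have hfib := Finset.card_eq_sum_card_fiberwise
        (f := h) (s := univ.filter fun e => h e ∈ S i) (t := S i)
        (fun e he => (mem_filter.mp he).2)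
      have hcast : ((univ.filter fun e => h e ∈ S i).card : ℝ)
          = ∑ v ∈ S i, (((univ.filter fun e => h e ∈ S i).filter fun e => h e = v).card : ℝ) := by
        exact_mod_cast congrArg (Nat.cast : ℕ → ℝ) hfib
      rw [hcast]
      refine Finset.sum_congr rfl ?_
      intro v hv
      have hEq : ((univ.filter fun e => h e ∈ S i).filter fun e => h e = v)
          = univ.filter fun e => h e = v := by
        ext e
        simp only [mem_filter, mem_univ, true_and, and_iff_right_iff_imp]
        intro he; rw [he]; exact hv
      rw [hEq, hdval]
    have hc3 : t i * ((S i).card : ℝ) ≤ ∑ v ∈ S i, d v := by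
      have : t i * ((S i).card : ℝ) = ∑ v ∈ S i, t i := by
        rw [Finset.sum_const, nsmul_eq_mul]; ring
      rw [this]
      apply Finset.sum_le_sum
      intro v hv
      exact (hmemS i v).mp hv
    have hρi := hρ_ge (S (i+1)) ⟨v₀, hv₀S _⟩
    unfold hDensity at hρi
    rw [div_le_iff₀ (hScard_pos (i+1))] at hρi
    have hc4 : ((univ.filter fun e => h e ∈ S i).card : ℝ)
        ≤ ((univ.filter fun e => ends e ⊆ S (i+1)).card : ℝ) := by exact_mod_cast hc1
    calc t i * ((S i).card : ℝ) ≤ ∑ v ∈ S i, d v := hc3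
      _ = ((univ.filter fun e => h e ∈ S i).card : ℝ) := hc2.symm
      _ ≤ ((univ.filter fun e => ends e ⊆ S (i+1)).card : ℝ) := hc4
      _ ≤ ρ * ((S (i+1)).card : ℝ) := hρi
  -- choose k
  set k : ℕ := ⌈16 * L / ε⌉₊ + 1 with hkdef
  have hk_lb : 16 * L / ε < (k:ℝ) := by
    have := Nat.le_ceil (16 * L / ε)
    rw [hkdef]; push_cast; linarith
  have hk_ub : (k:ℝ) ≤ 16 * L / ε + 2 := by
    have h1 : (0:ℝ) ≤ 16 * L / ε := by positivity
    have := Nat.ceil_lt_add_one h1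
    rw [hkdef]; push_cast; linarith
  clear_value k
  have hk19 : (k:ℝ) ≤ 19 * L / ε := by
    have : (2:ℝ) ≤ 3 * L / ε := by
      rw [le_div_iff₀ hε0]; nlinarith
    have h3 : 16 * L / ε + 3 * L / ε = 19 * L / ε := by ring
    linarith
  have hkα : α * k ≤ 19/100 * ε := by
    have h1 : α * k ≤ α * (19 * L / ε) :=
      mul_le_mul_of_nonneg_left hk19 hα0
    have h2 : α * (19 * L / ε) = 19/100 * ε := by
      rw [hαdef]; field_simp
    linarith
  -- pigeonhole: some level grows slowly
  have hpigeon : ∃ i < k, ((S (i+1)).card : ℝ) ≤ (1 + ε/8) * ((S i).card : ℝ) := by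
    by_contra hcon
    push_neg at hcon
    have hgrow : ∀ i ≤ k, (1 + ε/8) ^ i ≤ ((S i).card : ℝ) := by
      intro i hi
      induction i with
      | zero => simpa using hScard_pos 0
      | succ i ih =>
        have hik : i < k := by omega
        have h1 := ih (le_of_lt hik)
        have h2 := hcon i hik
        calc (1 + ε/8) ^ (i+1) = (1 + ε/8) * (1 + ε/8) ^ i := by ring
          _ ≤ (1 + ε/8) * ((S i).card : ℝ) := by
              apply mul_le_mul_of_nonneg_left h1; linarith
          _ ≤ ((S (i+1)).card : ℝ) := le_of_lt h2
    have hnk : (n:ℝ) < (1 + ε/8) ^ k := by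
      have hlog : ε/16 ≤ Real.log (1 + ε/8) := by
        have h1 : Real.log ((1+ε/8)⁻¹) ≤ (1+ε/8)⁻¹ - 1 :=
          Real.log_le_sub_one_of_pos (by positivity)
        rw [Real.log_inv] at h1
        have h2 : (1:ℝ) - (1+ε/8)⁻¹ = (ε/8)/(1+ε/8) := by
          field_simp
          ring
        have h3 : ε/16 ≤ (ε/8)/(1+ε/8) := by
          rw [le_div_iff₀ (by linarith)]
          nlinarith
        linarith
      have hn0 : (0:ℝ) < (n:ℝ) := by linarith
      have hppos : (0:ℝ) < (1+ε/8)^k := pow_pos (by linarith) k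
      have hLk : L < (k:ℝ) * (ε/16) := by
        have hmul := mul_lt_mul_of_pos_right hk_lb (show (0:ℝ) < ε/16 by linarith)
        have heq : 16 * L / ε * (ε/16) = L := by field_simp
        linarith
      have hlt : L < Real.log ((1+ε/8)^k) := by
        rw [Real.log_pow]
        calc L < (k:ℝ) * (ε/16) := hLk
          _ ≤ (k:ℝ) * Real.log (1+ε/8) :=
            mul_le_mul_of_nonneg_left hlog (Nat.cast_nonneg k)
      have hexp := Real.exp_lt_exp.mpr hlt
      rw [hLdef, Real.exp_log hn0, Real.exp_log hppos] at hexp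
      exact hexp
    have hg := hgrow k le_rfl
    have hc := hScard_le k
    linarith
  obtain ⟨i, hik, hgrow⟩ := hpigeon
  -- t i ≤ (1+ε/8) ρ
  have hti : t i ≤ (1 + ε/8) * ρ := by
    have h1 := key i
    have h2 : ρ * ((S (i+1)).card : ℝ) ≤ ρ * ((1 + ε/8) * ((S i).card : ℝ)) :=
      mul_le_mul_of_nonneg_left hgrow hρ0
    have h3 : t i * ((S i).card : ℝ) ≤ (1 + ε/8) * ρ * ((S i).card : ℝ) := by
      nlinarith
    exact le_of_mul_le_mul_right (by linarith) (hScard_pos i)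
  -- combine with threshold lower bound
  have hmain : μ / (1 + α) ^ k ≤ (1 + ε/8) * ρ + β * k := by
    have h1 := htlb i
    have h2 : μ / (1 + α) ^ k ≤ μ / (1 + α) ^ i := by
      apply div_le_div_of_nonneg_left hμ0 (pow_pos h1α i)
      exact pow_le_pow_right₀ (by linarith) (le_of_lt hik)
    have h3 : β * (i:ℝ) ≤ β * (k:ℝ) := by
      have : (i:ℝ) ≤ (k:ℝ) := by exact_mod_cast le_of_lt hik
      exact mul_le_mul_of_nonneg_left this hβ.le
    linarith
  -- bound (1+α)^k
  have hpow : (1 + α) ^ k ≤ 1 + ε/4 := by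
    have hb : 1 - α * k ≤ (1 - α)^k := by
      have hber := one_add_mul_le_pow (a := -α) (by linarith) k
      have heq : (1 + -α : ℝ) = 1 - α := by ring
      rw [heq] at hber
      linarith
    have hprod : (1+α)^k * (1-α)^k ≤ 1 := by
      rw [← mul_pow]
      have heq : (1+α)*(1-α) = 1 - α^2 := by ring
      rw [heq]
      apply pow_le_one₀ (by nlinarith) (by nlinarith)
    have hpos2 : (0:ℝ) < 1 - α * k := by nlinarith
    have h5 : (1+α)^k * (1 - α*k) ≤ 1 := by
      have hmm := mul_le_mul_of_nonneg_left hb (le_of_lt (pow_pos h1α k))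
      calc (1+α)^k * (1-α*k) ≤ (1+α)^k * (1-α)^k := hmm
        _ ≤ 1 := hprod
    have h6 : (1+α)^k ≤ 1 / (1 - α*k) := by
      rw [le_div_iff₀ hpos2]; exact h5
    have h7 : 1 / (1 - α*k) ≤ 1 + ε/4 := by
      rw [div_le_iff₀ hpos2]
      nlinarith [mul_le_mul_of_nonneg_left hkα (show (0:ℝ) ≤ 1+ε/4 by linarith)]
    linarith
  have hμle : μ ≤ (1 + ε/4) * ((1 + ε/8) * ρ + β * k) := by
    have hRnn : (0:ℝ) ≤ (1 + ε/8) * ρ + β * k := by positivity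
    have h1 : μ ≤ (1 + α) ^ k * ((1 + ε/8) * ρ + β * k) := by
      rw [div_le_iff₀ (pow_pos h1α k)] at hmain
      nlinarith [pow_pos h1α k]
    have h2 : (1 + α) ^ k * ((1 + ε/8) * ρ + β * k)
        ≤ (1 + ε/4) * ((1 + ε/8) * ρ + β * k) :=
      mul_le_mul_of_nonneg_right hpow hRnn
    linarith
  have hfinal : μ ≤ (1 + ε) * ρ + 100 * β * L / ε := by
    have hbk : β * (k:ℝ) ≤ β * (19 * L / ε) := mul_le_mul_of_nonneg_left hk19 hβ.le
    have h1 : (1 + ε/4) * ((1 + ε/8) * ρ) ≤ (1 + ε) * ρ := by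
      nlinarith [mul_nonneg hρ0 hε0.le,
        mul_le_mul_of_nonneg_left hε1.le (mul_nonneg hρ0 hε0.le)]
    have h2 : (1 + ε/4) * (β * k) ≤ 100 * β * L / ε := by
      rw [le_div_iff₀ hε0]
      have hkε : (k:ℝ) * ε ≤ 19 * L := by
        have hkε' := hk19
        rw [le_div_iff₀ hε0] at hkε'
        exact hkε'
      nlinarith [mul_le_mul_of_nonneg_left hkε hβ.le,
        mul_nonneg hβ.le hLpos.le,
        mul_le_mul_of_nonneg_left hkε (mul_nonneg hβ.le hε0.le),
        mul_nonneg (mul_nonneg hβ.le hLpos.le) hε0.le,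
        mul_le_mul_of_nonneg_left hε1.le (mul_nonneg hβ.le hLpos.le)]
    linarith [hμle, h1, h2]
  -- conclude about the sSup
  refine csSup_le ⟨d v₀, ⟨v₀, hddef ▸ rfl⟩⟩ ?_
  rintro y ⟨v, rfl⟩
  exact le_trans (hv₀ v (mem_univ v)) hfinal
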